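/- Let γ₀ > 0 and 0 < d_m < 1 < d_M. If c₂ ∈ ℝ satisfies γ₀/(1 − d_M) < c₂ < γ₀/(1 − d_m) and c₁ = γ₀ − c₂, then for every d̃ ∈ [d_m, d_M] one has c₂ + c₁/d̃ > 0. -/
import Mathlib

/-- Core algebraic lemma in the proof of Theorem 2 of the paper: the constraints
`c₁ + c₂ = γ₀` and `γ₀/(1 - d_M) < c₂ < γ₀/(1 - d_m)` guarantee that the
effective coefficient `c₂ + c₁/d̃` is positive for every `d̃ ∈ [d_m, d_M]`. -/
theorem stmt_5 (γ₀ dm dM c₁ c₂ : ℝ)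
    (hγ₀ : 0 < γ₀) (hdm : 0 < dm) (hdm1 : dm < 1) (hdM : 1 < dM)
    (hlo : γ₀ / (1 - dM) < c₂) (hhi : c₂ < γ₀ / (1 - dm))
    (hc₁ : c₁ = γ₀ - c₂) :
    ∀ d ∈ Set.Icc dm dM, 0 < c₂ + c₁ / d := by
  intro d hd
  obtain ⟨h1, h2⟩ := hd
  have hdpos : 0 < d := lt_of_lt_of_le hdm h1
  have hM : c₂ * (1 - dM) < γ₀ := by
    have := (div_lt_iff_of_neg (by linarith : 1 - dM < 0)).mp hlo
    linarith
  have hm : c₂ * (1 - dm) < γ₀ := by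
    have := (lt_div_iff₀ (by linarith : 0 < 1 - dm)).mp hhi
    linarith
  rw [hc₁]
  have key : 0 < c₂ * (d - 1) + γ₀ := by
    rcases le_or_gt c₂ 0 with hc | hc
    · nlinarith
    · nlinarith
  have : c₂ + (γ₀ - c₂) / d = (c₂ * (d - 1) + γ₀) / d := by
    field_simp; ring
  rw [this]
  positivity
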